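/- Let n ≥ 1 and let F: R^{2n-1} → R be a strictly convex real analytic function (its Hessian is positive definite at every point). Let S = {z ∈ C^n : Im z_n = F(z_1, …, z_{n-1}, Re z_n)}, where C^{n-1} × R is identified with R^{2n-1} via z_j = x_j + i y_j ↦ (x_j, y_j). Then S contains no nonconstant analytic disk: every holomorphic map φ: U → C^n on a connected open set U ⊂ C with φ(U) ⊂ S is constant. -/

import Mathlib

open Set Filter Topology

noncomputable section

lemma strict_above_tangent {E : Type*} [NormedAddCommGroup E] [NormedSpace ℝ E]
    (F : E → ℝ) (hF : ContDiff ℝ 2 F)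
    (hconv : ∀ p v, v ≠ 0 → 0 < iteratedFDeriv ℝ 2 F p ![v, v]) :
    ∀ p q : E, q ≠ p → F p + fderiv ℝ F p (q - p) < F q := by
  intro p q hne
  set v := q - p with hv
  have hv0 : v ≠ 0 := sub_ne_zero.mpr hne
  have hF1 : Differentiable ℝ F := hF.differentiable two_ne_zero
  have hF' : Differentiable ℝ (fderiv ℝ F) :=
    (hF.fderiv_right (m := 1) (by norm_num)).differentiable one_ne_zero
  set g : ℝ → ℝ := fun t => F (p + t • v) with hg_def
  set g' : ℝ → ℝ := fun t => fderiv ℝ F (p + t • v) v with hg'_def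
  have hline : ∀ t : ℝ, HasDerivAt (fun s : ℝ => p + s • v) v t := fun t => by
    simpa using ((hasDerivAt_id t).smul_const v).const_add p
  have hg : ∀ t, HasDerivAt g (g' t) t := fun t =>
    ((hF1 _).hasFDerivAt.comp_hasDerivAt t (hline t))
  have hg' : ∀ t, HasDerivAt g' (fderiv ℝ (fderiv ℝ F) (p + t • v) v v) t := by
    intro t
    have h2 : HasDerivAt (fun s => fderiv ℝ F (p + s • v))
        (fderiv ℝ (fderiv ℝ F) (p + t • v) v) t :=
      (hF' _).hasFDerivAt.comp_hasDerivAt t (hline t)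
    exact ((ContinuousLinearMap.apply ℝ ℝ v).hasFDerivAt.comp_hasDerivAt t h2)
  have hpos : ∀ t, 0 < deriv g' t := by
    intro t
    rw [(hg' t).deriv]
    have h := hconv (p + t • v) v hv0
    rwa [iteratedFDeriv_two_apply, Matrix.cons_val_zero, Matrix.cons_val_one,
      Matrix.cons_val_zero] at h
  have hmono : StrictMono g' := strictMono_of_deriv_pos hpos
  obtain ⟨c, hc, hceq⟩ := exists_hasDerivAt_eq_slope g g' one_pos
    (fun x _ => (hg x).continuousAt.continuousWithinAt) (fun x _ => hg x)
  have h1 : g' 0 < g' c := hmono hc.1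
  have e0 : g 0 = F p := by simp [hg_def]
  have e1 : g 1 = F q := by simp [hg_def, hv]
  have e2 : g' 0 = fderiv ℝ F p (q - p) := by simp [hg'_def, hv]
  rw [hceq, sub_zero, div_one, e0, e1] at h1
  rw [e2] at h1
  linarith

/-- The identification `ℂⁿ ≅ ℝ^{2n}` restricted to the first `2n-1` real
coordinates `(x_1, y_1, …, x_{n-1}, y_{n-1}, x_n)`, where `z_j = x_j + i y_j`. -/
def realCoords (n : ℕ) (z : Fin n → ℂ) : Fin (2 * n - 1) → ℝ := fun i =>
  if (i : ℕ) % 2 = 0 then (z ⟨(i : ℕ) / 2, by have := i.2; omega⟩).re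
  else (z ⟨(i : ℕ) / 2, by have := i.2; omega⟩).im

set_option maxHeartbeats 1000000 in
/-- The graph `S = {z ∈ ℂⁿ : Im z_n = F(z_1, …, z_{n-1}, Re z_n)}` of a strictly
convex real analytic function `F : ℝ^{2n-1} → ℝ` contains no nonconstant
analytic disk. -/
theorem strictly_convex_graph_contains_no_disk
    (n : ℕ) (hn : 1 ≤ n)
    (F : (Fin (2 * n - 1) → ℝ) → ℝ)
    (hFan : AnalyticOnNhd ℝ F Set.univ)
    (hFconv : ∀ (p v : Fin (2 * n - 1) → ℝ), v ≠ 0 →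
      0 < iteratedFDeriv ℝ 2 F p ![v, v])
    (U : Set ℂ) (hU : IsOpen U) (hUconn : IsConnected U)
    (φ : ℂ → Fin n → ℂ) (hφ : DifferentiableOn ℂ φ U)
    (hmaps : ∀ ζ ∈ U, (φ ζ ⟨n - 1, by omega⟩).im = F (realCoords n (φ ζ))) :
    ∃ c, ∀ ζ ∈ U, φ ζ = c := by
  have hF2 : ContDiff ℝ 2 F := by
    rw [contDiff_iff_contDiffAt]
    exact fun x => (hFan x (Set.mem_univ x)).contDiffAt
  have hstrict := strict_above_tangent F hF2 hFconv
  obtain ⟨ζ₀, hζ₀⟩ := hUconn.nonempty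
  set jn : Fin n := ⟨n - 1, by omega⟩ with hjn
  set q : ℂ → (Fin (2 * n - 1) → ℝ) := fun ζ => realCoords n (φ ζ) with hq_def
  set p : Fin (2 * n - 1) → ℝ := q ζ₀ with hp_def
  set a : (Fin (2 * n - 1) → ℝ) →L[ℝ] ℝ := fderiv ℝ F p with ha_def
  -- a as a sum over coordinates
  have ha_sum : ∀ x : Fin (2 * n - 1) → ℝ, a x = ∑ i, x i * a (Pi.single i 1) := by
    intro x
    have hx : x = ∑ i : Fin (2 * n - 1), x i • (Pi.single i 1 : Fin (2 * n - 1) → ℝ) := by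
      ext j
      simp [Pi.single_apply, Finset.sum_apply]
    conv_lhs => rw [hx]
    rw [map_sum]
    simp [smul_eq_mul]
  set idx : Fin (2 * n - 1) → Fin n :=
    fun i => ⟨(i : ℕ) / 2, by have := i.2; omega⟩ with hidx
  set coeff : Fin (2 * n - 1) → ℂ := fun i =>
    if (i : ℕ) % 2 = 0 then ((a (Pi.single i 1) : ℝ) : ℂ)
    else (-Complex.I) * ((a (Pi.single i 1) : ℝ) : ℂ) with hcoeff
  have claim1 : ∀ z : Fin n → ℂ,
      (∑ i, coeff i * z (idx i)).re = a (realCoords n z) := by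
    intro z
    rw [ha_sum, Complex.re_sum]
    refine Finset.sum_congr rfl fun i _ => ?_
    by_cases h : (i : ℕ) % 2 = 0 <;>
      · simp only [hcoeff, hidx, realCoords, h, if_true, if_false, ite_true, ite_false,
          Complex.mul_re, Complex.mul_im, Complex.ofReal_re, Complex.ofReal_im,
          Complex.neg_re, Complex.neg_im, Complex.I_re, Complex.I_im]
        ring
  set H : ℂ → ℂ := fun ζ =>
    (-Complex.I) * φ ζ jn - (∑ i, coeff i * φ ζ (idx i)) + ((a p - F p : ℝ) : ℂ)
    with hH
  have hφj : ∀ j : Fin n, DifferentiableOn ℂ (fun ζ => φ ζ j) U := fun j =>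
    (ContinuousLinearMap.proj j : (Fin n → ℂ) →L[ℂ] ℂ).differentiable.comp_differentiableOn hφ
  have hHd : DifferentiableOn ℂ H U := by
    apply DifferentiableOn.add
    · apply DifferentiableOn.sub
      · exact (hφj jn).const_mul _
      · exact DifferentiableOn.fun_sum fun i _ => (hφj (idx i)).const_mul _
    · exact differentiableOn_const _
  have hHre : ∀ ζ ∈ U, (H ζ).re = F (q ζ) - F p - a (q ζ - p) := by
    intro ζ hζ
    have h1 : ((-Complex.I) * φ ζ jn).re = (φ ζ jn).im := by
      simp [Complex.mul_re]
    simp only [hH, Complex.add_re, Complex.sub_re, h1, Complex.ofReal_re, claim1]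
    rw [hmaps ζ hζ, map_sub]
    ring
  have hHnonneg : ∀ ζ ∈ U, 0 ≤ (H ζ).re := by
    intro ζ hζ
    rw [hHre ζ hζ]
    rcases eq_or_ne (q ζ) p with h | h
    · simp [h]
    · have := hstrict p (q ζ) h
      linarith
  have hH0 : (H ζ₀).re = 0 := by
    rw [hHre ζ₀ hζ₀, ← hp_def]
    simp
  -- maximum modulus principle for exp (-H)
  set f : ℂ → ℂ := fun ζ => Complex.exp (-H ζ) with hf
  have hfd : DifferentiableOn ℂ f U := hHd.neg.cexp
  have hfnorm : ∀ ζ, ‖f ζ‖ = Real.exp (-(H ζ).re) := by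
    intro ζ
    rw [hf]
    simp [Complex.norm_exp]
  have hmax : IsMaxOn (norm ∘ f) U ζ₀ := by
    intro ζ hζ
    simp only [Function.comp_apply, Set.mem_setOf_eq, hfnorm, hH0, neg_zero, Real.exp_zero]
    exact Real.exp_le_one_iff.mpr (neg_nonpos.mpr (hHnonneg ζ hζ))
  have key : ∀ ζ ∈ U, q ζ = p := by
    intro ζ hζ
    have := Complex.norm_eqOn_of_isPreconnected_of_isMaxOn hUconn.isPreconnected hU hfd hζ₀
      hmax hζ
    simp only [Function.comp_apply, Function.const_apply, hfnorm, hH0, neg_zero,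
      Real.exp_zero] at this
    have hre0 : (H ζ).re = 0 := by
      have h := (Real.exp_eq_exp (x := -(H ζ).re) (y := 0)).mp (by rw [this, Real.exp_zero])
      linarith
    by_contra hne
    have := hstrict p (q ζ) hne
    rw [hHre ζ hζ] at hre0
    linarith
  -- conclude φ is constant
  refine ⟨φ ζ₀, fun ζ hζ => ?_⟩
  funext j
  have hkey := key ζ hζ
  apply Complex.ext
  · -- real parts
    have h2j : 2 * (j : ℕ) < 2 * n - 1 := by have := j.2; omega
    have := congrFun hkey ⟨2 * (j : ℕ), h2j⟩
    simp only [hq_def, hp_def, realCoords] at this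
    have harith : (2 * (j : ℕ)) % 2 = 0 := by omega
    have harith2 : (2 * (j : ℕ)) / 2 = (j : ℕ) := by omega
    simpa [harith, harith2] using this
  · -- imaginary parts
    by_cases hj : (j : ℕ) = n - 1
    · have hjeq : j = jn := by apply Fin.ext; simpa using hj
      rw [hjeq]
      have e1 := hmaps ζ hζ
      have e2 := hmaps ζ₀ hζ₀
      rw [e1, e2]
      exact congrArg F hkey
    · have h2j : 2 * (j : ℕ) + 1 < 2 * n - 1 := by have := j.2; omega
      have := congrFun hkey ⟨2 * (j : ℕ) + 1, h2j⟩
      simp only [hq_def, hp_def, realCoords] at this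
      have harith : ¬((2 * (j : ℕ) + 1) % 2 = 0) := by omega
      have harith2 : (2 * (j : ℕ) + 1) / 2 = (j : ℕ) := by omega
      simpa [harith, harith2] using this
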